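/- The additive group of the ring ℤ[X,Y]/(X² − 2X, Y² − 2Y, 8X, 8Y, 8XY) is isomorphic to ℤ ⊕ (ℤ/8ℤ)³. -/

import Mathlib

open MvPolynomial

namespace Stmt15

noncomputable abbrev P := MvPolynomial (Fin 2) ℤ

noncomputable abbrev I : Ideal P := Ideal.span
  ({(X 0) ^ 2 - 2 * X 0, (X 1) ^ 2 - 2 * X 1, 8 * X 0, 8 * X 1,
    8 * (X 0 * X 1)} : Set P)

noncomputable abbrev Q := P ⧸ I

/-- model ring carrier -/
def T := ℤ × ZMod 8 × ZMod 8 × ZMod 8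

def tmk (a : ℤ) (b c d : ZMod 8) : T := (a, b, c, d)

instance : AddCommGroup T := inferInstanceAs (AddCommGroup (ℤ × ZMod 8 × ZMod 8 × ZMod 8))

instance : Mul T := ⟨fun t s =>
  (t.1 * s.1,
   (t.1 : ZMod 8) * s.2.1 + (s.1 : ZMod 8) * t.2.1 + 2 * t.2.1 * s.2.1,
   (t.1 : ZMod 8) * s.2.2.1 + (s.1 : ZMod 8) * t.2.2.1 + 2 * t.2.2.1 * s.2.2.1,
   (t.1 : ZMod 8) * s.2.2.2 + (s.1 : ZMod 8) * t.2.2.2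
     + t.2.1 * s.2.2.1 + s.2.1 * t.2.2.1
     + 2 * (t.2.1 * s.2.2.2 + s.2.1 * t.2.2.2)
     + 2 * (t.2.2.1 * s.2.2.2 + s.2.2.1 * t.2.2.2)
     + 4 * (t.2.2.2 * s.2.2.2))⟩

instance : One T := ⟨tmk 1 0 0 0⟩

lemma T.mul_def (x y : T) : x * y =
    ((x.1 * y.1 : ℤ),
     (x.1 : ZMod 8) * y.2.1 + (y.1 : ZMod 8) * x.2.1 + 2 * x.2.1 * y.2.1,
     (x.1 : ZMod 8) * y.2.2.1 + (y.1 : ZMod 8) * x.2.2.1 + 2 * x.2.2.1 * y.2.2.1,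
     (x.1 : ZMod 8) * y.2.2.2 + (y.1 : ZMod 8) * x.2.2.2
       + x.2.1 * y.2.2.1 + y.2.1 * x.2.2.1
       + 2 * (x.2.1 * y.2.2.2 + y.2.1 * x.2.2.2)
       + 2 * (x.2.2.1 * y.2.2.2 + y.2.2.1 * x.2.2.2)
       + 4 * (x.2.2.2 * y.2.2.2)) := rfl

lemma T.add_def (x y : T) : x + y =
    ((x.1 + y.1 : ℤ), x.2.1 + y.2.1, x.2.2.1 + y.2.2.1, x.2.2.2 + y.2.2.2) := rfl

lemma T.zero_def : (0 : T) = ((0 : ℤ), 0, 0, 0) := rfl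
lemma T.one_def : (1 : T) = ((1 : ℤ), 0, 0, 0) := rfl
lemma T.neg_def (x : T) : -x = ((-x.1 : ℤ), -x.2.1, -x.2.2.1, -x.2.2.2) := rfl

lemma T.ext' {x y : T} (h1 : x.1 = y.1) (h2 : x.2.1 = y.2.1) (h3 : x.2.2.1 = y.2.2.1)
    (h4 : x.2.2.2 = y.2.2.2) : x = y :=
  Prod.ext h1 (Prod.ext h2 (Prod.ext h3 h4))

instance : CommRing T where
  __ := (inferInstance : AddCommGroup T)
  mul := (· * ·)
  one := 1
  mul_assoc x y z := by
    refine T.ext' ?_ ?_ ?_ ?_ <;> rw [T.mul_def, T.mul_def, T.mul_def, T.mul_def] <;> push_cast <;> ring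
  one_mul x := by
    refine T.ext' ?_ ?_ ?_ ?_ <;> rw [T.mul_def, T.one_def] <;> push_cast <;> ring
  mul_one x := by
    refine T.ext' ?_ ?_ ?_ ?_ <;> rw [T.mul_def, T.one_def] <;> push_cast <;> ring
  left_distrib x y z := by
    refine T.ext' ?_ ?_ ?_ ?_ <;> rw [T.mul_def, T.mul_def, T.mul_def] <;> erw [T.add_def, T.add_def] <;> push_cast <;> ring
  right_distrib x y z := by
    refine T.ext' ?_ ?_ ?_ ?_ <;> rw [T.mul_def, T.mul_def, T.mul_def] <;> erw [T.add_def, T.add_def] <;> push_cast <;> ring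
  zero_mul x := by
    refine T.ext' ?_ ?_ ?_ ?_ <;> rw [T.mul_def, T.zero_def] <;> push_cast <;> ring
  mul_zero x := by
    refine T.ext' ?_ ?_ ?_ ?_ <;> rw [T.mul_def, T.zero_def] <;> push_cast <;> ring
  mul_comm x y := by
    refine T.ext' ?_ ?_ ?_ ?_ <;> rw [T.mul_def, T.mul_def] <;> push_cast <;> ring
  natCast n := ((n : ℤ), 0, 0, 0)
  natCast_zero := rfl
  natCast_succ n := rfl
  intCast n := ((n : ℤ), 0, 0, 0)
  intCast_ofNat n := rfl
  intCast_negSucc n := by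
    refine T.ext' ?_ ?_ ?_ ?_
    · show Int.negSucc n = -(((n + 1 : ℕ) : ℤ))
      simp [Int.negSucc_eq]
    all_goals show (0 : ZMod 8) = -0
    all_goals rw [neg_zero]

lemma T.mul_mk (a a' : ℤ) (b c d b' c' d' : ZMod 8) :
    tmk a b c d * tmk a' b' c' d' =
    tmk (a * a')
     ((a : ZMod 8) * b' + (a' : ZMod 8) * b + 2 * b * b')
     ((a : ZMod 8) * c' + (a' : ZMod 8) * c + 2 * c * c')
     ((a : ZMod 8) * d' + (a' : ZMod 8) * d + b * c' + b' * c
       + 2 * (b * d' + b' * d) + 2 * (c * d' + c' * d) + 4 * (d * d')) := rfl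

lemma T.add_mk (a a' : ℤ) (b c d b' c' d' : ZMod 8) :
    tmk a b c d + tmk a' b' c' d' = tmk (a + a') (b + b') (c + c') (d + d') := rfl

lemma T.sub_mk (a a' : ℤ) (b c d b' c' d' : ZMod 8) :
    tmk a b c d - tmk a' b' c' d' = tmk (a - a') (b - b') (c - c') (d - d') := rfl

lemma T.intCast_def (m : ℤ) : (m : T) = tmk m 0 0 0 := rfl

lemma T.ofNat_def (n : ℕ) [n.AtLeastTwo] :
    (OfNat.ofNat n : T) = tmk (OfNat.ofNat n) 0 0 0 := rfl

lemma T.zero_mk : (0 : T) = tmk 0 0 0 0 := rfl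
lemma T.one_mk : (1 : T) = tmk 1 0 0 0 := rfl

lemma tmk_inj {a a' : ℤ} {b c d b' c' d' : ZMod 8} :
    tmk a b c d = tmk a' b' c' d' ↔ a = a' ∧ b = b' ∧ c = c' ∧ d = d' := by
  refine ⟨fun h => ⟨congrArg (fun x : T => x.1) h, congrArg (fun x : T => x.2.1) h,
    congrArg (fun x : T => x.2.2.1) h, congrArg (fun x : T => x.2.2.2) h⟩, ?_⟩
  rintro ⟨rfl, rfl, rfl, rfl⟩
  rfl

noncomputable def ψ : P →+* T := eval₂Hom (Int.castRingHom T) ![tmk 0 1 0 0, tmk 0 0 1 0]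

lemma ψ_X0 : ψ (X 0) = tmk 0 1 0 0 := by
  unfold ψ; rw [eval₂Hom_X']; rfl
lemma ψ_X1 : ψ (X 1) = tmk 0 0 1 0 := by
  unfold ψ; rw [eval₂Hom_X']; rfl

lemma hker : I ≤ RingHom.ker ψ := by
  rw [Ideal.span_le]
  rintro p hp
  simp only [Set.mem_insert_iff, Set.mem_singleton_iff] at hp
  rcases hp with rfl | rfl | rfl | rfl | rfl <;>
    simp only [SetLike.mem_coe, RingHom.mem_ker, map_sub, map_pow, map_mul, map_ofNat,
      ψ_X0, ψ_X1, pow_two, T.mul_mk, T.sub_mk, T.ofNat_def, T.zero_mk, tmk_inj] <;>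
    refine ⟨by norm_num, by push_cast; ring_nf; try decide, by push_cast; ring_nf; try decide,
      by push_cast; ring_nf; try decide⟩

noncomputable def Φ : Q →+* T :=
  Ideal.Quotient.lift I ψ (fun a ha => RingHom.mem_ker.mp (hker ha))

noncomputable def x0 : Q := Ideal.Quotient.mk I (X 0)
noncomputable def x1 : Q := Ideal.Quotient.mk I (X 1)
noncomputable def x01 : Q := Ideal.Quotient.mk I (X 0 * X 1)

lemma x0_def : Ideal.Quotient.mk I (X 0) = x0 := rfl
lemma x1_def : Ideal.Quotient.mk I (X 1) = x1 := rfl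
lemma x01_def : Ideal.Quotient.mk I (X 0 * X 1) = x01 := rfl

lemma Φ_x0 : Φ x0 = tmk 0 1 0 0 := by
  rw [x0_def.symm]; erw [Ideal.Quotient.lift_mk]; exact ψ_X0

lemma Φ_x1 : Φ x1 = tmk 0 0 1 0 := by
  rw [x1_def.symm]; erw [Ideal.Quotient.lift_mk]; exact ψ_X1

lemma Φ_x01 : Φ x01 = tmk 0 0 0 1 := by
  rw [x01_def.symm]; erw [Ideal.Quotient.lift_mk]
  rw [map_mul, ψ_X0, ψ_X1, T.mul_mk, tmk_inj]
  refine ⟨by ring, by push_cast; ring, by push_cast; ring, by push_cast; ring⟩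

lemma hx0_8 : ((8 : ℤ) : Q) * x0 = 0 := by
  have h : ((8 : P) * X 0) ∈ I := Ideal.subset_span (by simp)
  have h0 : Ideal.Quotient.mk I ((8 : P) * X 0) = 0 := Ideal.Quotient.eq_zero_iff_mem.mpr h
  rw [map_mul, map_ofNat] at h0
  rw [x0_def] at h0
  simpa using h0

lemma hx1_8 : ((8 : ℤ) : Q) * x1 = 0 := by
  have h : ((8 : P) * X 1) ∈ I := Ideal.subset_span (by simp)
  have h0 : Ideal.Quotient.mk I ((8 : P) * X 1) = 0 := Ideal.Quotient.eq_zero_iff_mem.mpr h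
  rw [map_mul, map_ofNat] at h0
  rw [x1_def] at h0
  simpa using h0

lemma hx01_8 : ((8 : ℤ) : Q) * x01 = 0 := by
  have h : ((8 : P) * (X 0 * X 1)) ∈ I := Ideal.subset_span (by simp)
  have h0 : Ideal.Quotient.mk I ((8 : P) * (X 0 * X 1)) = 0 := Ideal.Quotient.eq_zero_iff_mem.mpr h
  rw [map_mul, map_ofNat] at h0
  rw [x01_def] at h0
  simpa using h0

noncomputable def L0 : ZMod 8 →+ Q :=
  ZMod.lift 8 ⟨(AddMonoidHom.mulRight x0).comp (Int.castAddHom Q), by simpa using hx0_8⟩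

noncomputable def L1 : ZMod 8 →+ Q :=
  ZMod.lift 8 ⟨(AddMonoidHom.mulRight x1).comp (Int.castAddHom Q), by simpa using hx1_8⟩

noncomputable def L01 : ZMod 8 →+ Q :=
  ZMod.lift 8 ⟨(AddMonoidHom.mulRight x01).comp (Int.castAddHom Q), by simpa using hx01_8⟩

lemma L0_coe (m : ℤ) : L0 (m : ZMod 8) = (m : Q) * x0 := ZMod.lift_coe _ _ m
lemma L1_coe (m : ℤ) : L1 (m : ZMod 8) = (m : Q) * x1 := ZMod.lift_coe _ _ m
lemma L01_coe (m : ℤ) : L01 (m : ZMod 8) = (m : Q) * x01 := ZMod.lift_coe _ _ m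

noncomputable def Ψ : (ℤ × ZMod 8 × ZMod 8 × ZMod 8) →+ Q :=
  ((Int.castAddHom Q).comp (AddMonoidHom.fst ℤ (ZMod 8 × ZMod 8 × ZMod 8)))
  + (L0.comp ((AddMonoidHom.fst (ZMod 8) (ZMod 8 × ZMod 8)).comp
      (AddMonoidHom.snd ℤ (ZMod 8 × ZMod 8 × ZMod 8))))
  + (L1.comp ((AddMonoidHom.fst (ZMod 8) (ZMod 8)).comp
      ((AddMonoidHom.snd (ZMod 8) (ZMod 8 × ZMod 8)).comp
        (AddMonoidHom.snd ℤ (ZMod 8 × ZMod 8 × ZMod 8)))))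
  + (L01.comp ((AddMonoidHom.snd (ZMod 8) (ZMod 8)).comp
      ((AddMonoidHom.snd (ZMod 8) (ZMod 8 × ZMod 8)).comp
        (AddMonoidHom.snd ℤ (ZMod 8 × ZMod 8 × ZMod 8)))))

lemma Ψ_apply (a : ℤ) (b c d : ZMod 8) :
    Ψ (a, b, c, d) = (a : Q) + L0 b + L1 c + L01 d := rfl

lemma ΦΨ : ∀ t, Φ (Ψ t) = t := by
  rintro ⟨a, b, c, d⟩
  obtain ⟨m1, rfl⟩ := ZMod.intCast_surjective b
  obtain ⟨m2, rfl⟩ := ZMod.intCast_surjective c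
  obtain ⟨m3, rfl⟩ := ZMod.intCast_surjective d
  rw [Ψ_apply, L0_coe, L1_coe, L01_coe, map_add, map_add, map_add,
    map_mul, map_mul, map_mul, map_intCast, map_intCast, map_intCast, map_intCast,
    Φ_x0, Φ_x1, Φ_x01]
  rw [T.intCast_def, T.intCast_def, T.intCast_def, T.intCast_def,
    T.mul_mk, T.mul_mk, T.mul_mk, T.add_mk, T.add_mk, T.add_mk]
  exact tmk_inj.mpr ⟨by ring, by push_cast; ring, by push_cast; ring, by push_cast; ring⟩

lemma rel00 : x0 * x0 = ((2 : ℤ) : Q) * x0 := by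
  have h : ((X 0 : P) ^ 2 - 2 * X 0) ∈ I := Ideal.subset_span (by simp)
  have h0 : Ideal.Quotient.mk I ((X 0 : P) ^ 2 - 2 * X 0) = 0 :=
    Ideal.Quotient.eq_zero_iff_mem.mpr h
  rw [map_sub, sub_eq_zero, map_pow, map_mul, map_ofNat, x0_def, pow_two] at h0
  rw [h0]; norm_num

lemma rel11 : x1 * x1 = ((2 : ℤ) : Q) * x1 := by
  have h : ((X 1 : P) ^ 2 - 2 * X 1) ∈ I := Ideal.subset_span (by simp)
  have h0 : Ideal.Quotient.mk I ((X 1 : P) ^ 2 - 2 * X 1) = 0 :=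
    Ideal.Quotient.eq_zero_iff_mem.mpr h
  rw [map_sub, sub_eq_zero, map_pow, map_mul, map_ofNat, x1_def, pow_two] at h0
  rw [h0]; norm_num

lemma rel01 : x0 * x1 = x01 := by
  rw [← x0_def, ← x1_def, ← x01_def, ← map_mul]

lemma rel10 : x1 * x0 = x01 := by
  rw [mul_comm, rel01]

lemma rel010 : x01 * x0 = ((2 : ℤ) : Q) * x01 := by
  have h : ((X 0 * X 1) * X 0 - 2 * (X 0 * X 1) : P) ∈ I := by
    have h1 : ((X 1 : P) * ((X 0) ^ 2 - 2 * X 0)) ∈ I :=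
      I.mul_mem_left _ (Ideal.subset_span (by simp))
    convert h1 using 1
    ring
  have h0 := Ideal.Quotient.eq_zero_iff_mem.mpr h
  simp only [map_sub, map_mul, map_ofNat, sub_eq_zero] at h0
  rw [← rel01, ← x0_def, ← x1_def, h0]; norm_num

lemma rel011 : x01 * x1 = ((2 : ℤ) : Q) * x01 := by
  have h : ((X 0 * X 1) * X 1 - 2 * (X 0 * X 1) : P) ∈ I := by
    have h1 : ((X 0 : P) * ((X 1) ^ 2 - 2 * X 1)) ∈ I :=
      I.mul_mem_left _ (Ideal.subset_span (by simp))
    convert h1 using 1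
    ring
  have h0 := Ideal.Quotient.eq_zero_iff_mem.mpr h
  simp only [map_sub, map_mul, map_ofNat, sub_eq_zero] at h0
  rw [← rel01, ← x0_def, ← x1_def, h0]; norm_num

lemma step0 (a : ℤ) (b c d : ZMod 8) :
    Ψ (a, b, c, d) * x0 = Ψ (0, (a : ZMod 8) + 2 * b, 0, c + 2 * d) := by
  obtain ⟨m1, rfl⟩ := ZMod.intCast_surjective b
  obtain ⟨m2, rfl⟩ := ZMod.intCast_surjective c
  obtain ⟨m3, rfl⟩ := ZMod.intCast_surjective d
  rw [Ψ_apply, Ψ_apply, L0_coe, L1_coe, L01_coe,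
    show ((a : ZMod 8) + 2 * (m1 : ZMod 8)) = ((a + 2 * m1 : ℤ) : ZMod 8) by push_cast; ring,
    show ((m2 : ZMod 8) + 2 * (m3 : ZMod 8)) = ((m2 + 2 * m3 : ℤ) : ZMod 8) by push_cast; ring,
    L0_coe, L01_coe, map_zero]
  rw [add_mul, add_mul, add_mul, mul_assoc, mul_assoc, mul_assoc, rel00, rel10, rel010]
  push_cast
  ring

lemma step1 (a : ℤ) (b c d : ZMod 8) :
    Ψ (a, b, c, d) * x1 = Ψ (0, 0, (a : ZMod 8) + 2 * c, b + 2 * d) := by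
  obtain ⟨m1, rfl⟩ := ZMod.intCast_surjective b
  obtain ⟨m2, rfl⟩ := ZMod.intCast_surjective c
  obtain ⟨m3, rfl⟩ := ZMod.intCast_surjective d
  rw [Ψ_apply, Ψ_apply, L0_coe, L1_coe, L01_coe,
    show ((a : ZMod 8) + 2 * (m2 : ZMod 8)) = ((a + 2 * m2 : ℤ) : ZMod 8) by push_cast; ring,
    show ((m1 : ZMod 8) + 2 * (m3 : ZMod 8)) = ((m1 + 2 * m3 : ℤ) : ZMod 8) by push_cast; ring,
    L1_coe, L01_coe, map_zero]
  rw [add_mul, add_mul, add_mul, mul_assoc, mul_assoc, mul_assoc, rel11, rel01, rel011]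
  push_cast
  ring

lemma Ψ_surj : Function.Surjective Ψ := by
  intro q
  obtain ⟨p, rfl⟩ := Ideal.Quotient.mk_surjective q
  induction p using MvPolynomial.induction_on with
  | C a =>
    refine ⟨(a, 0, 0, 0), ?_⟩
    rw [Ψ_apply, map_zero, map_zero, map_zero, add_zero, add_zero, add_zero,
      eq_intCast (MvPolynomial.C : ℤ →+* P) a, map_intCast]
  | add p q hp hq =>
    obtain ⟨t, ht⟩ := hp
    obtain ⟨s, hs⟩ := hq
    exact ⟨t + s, by rw [map_add, ht, hs, map_add]⟩
  | mul_X p n hp =>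
    obtain ⟨⟨a, b, c, d⟩, ht⟩ := hp
    fin_cases n
    · refine ⟨(0, (a : ZMod 8) + 2 * b, 0, c + 2 * d), ?_⟩
      simp only [Fin.zero_eta, Fin.isValue]
      rw [map_mul, x0_def, ← ht, step0]
    · refine ⟨(0, 0, (a : ZMod 8) + 2 * c, b + 2 * d), ?_⟩
      simp only [Fin.mk_one, Fin.isValue]
      rw [map_mul, x1_def, ← ht, step1]

noncomputable def finalEquiv : (ℤ × ZMod 8 × ZMod 8 × ZMod 8) ≃+ Q :=
  AddEquiv.ofBijective Ψ ⟨Function.LeftInverse.injective (g := Φ) ΦΨ, Ψ_surj⟩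

end Stmt15

open MvPolynomial in
theorem stmt_15 :
    Nonempty ((MvPolynomial (Fin 2) ℤ ⧸ Ideal.span
        ({(X 0) ^ 2 - 2 * X 0, (X 1) ^ 2 - 2 * X 1, 8 * X 0, 8 * X 1,
          8 * (X 0 * X 1)} : Set (MvPolynomial (Fin 2) ℤ))) ≃+
      ℤ × (ZMod 8 × ZMod 8 × ZMod 8)) :=
  ⟨Stmt15.finalEquiv.symm⟩
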